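/- arXiv:2407.04361 — 3 statements merged into one kernel-verified Lean document; each statement's English description precedes it below -/
import Mathlib

section
/- Let d ≥ 2 and k ≥ 2 be integers. Then the d-variate polynomial N_{k,d} is not the zero polynomial; consequently the non-conforming Crouzeix–Raviart simplex function B_k^{CR,K̂} = N_{k,d}/d does not vanish identically for k ≥ 2. -/
/-- `Q_{k,d}(x)`: the explicit representation of the Jacobi polynomial
`P_k^{(0,d-2)}(1-2x)`. -/
noncomputable def Qpoly (d k : ℕ) (x : ℝ) : ℝ :=
  ∑ ℓ ∈ Finset.range (k + 1),
    (-1 : ℝ) ^ ℓ * ((k + ℓ + d - 2).choose ℓ) * (k.choose ℓ) * x ^ ℓ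

/-- `R_{k,d}(x)`: the explicit representation of `P_k^{(0,d-2)}(2x-1)`. -/
noncomputable def Rpoly (d k : ℕ) (x : ℝ) : ℝ :=
  (-1 : ℝ) ^ k * ∑ ℓ ∈ Finset.range (k + 1),
    (-1 : ℝ) ^ ℓ * ((k + ℓ + d - 2).choose ℓ) * ((k + d - 2).choose (ℓ + d - 2))
      * x ^ ℓ

/-- The `d`-variate polynomial `N_{k,d}`; on the reference simplex it equals
`d` times the non-conforming Crouzeix–Raviart simplex function `B_k^{CR,K̂}`. -/
noncomputable def Npoly (d k : ℕ) (x : Fin d → ℝ) : ℝ :=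
  -1 + ∑ j, Qpoly d k (x j) + Rpoly d k (∑ j, x j)

lemma Qpoly_zero (d k : ℕ) : Qpoly d k 0 = 1 := by
  rw [Qpoly, Finset.sum_eq_single 0]
  · simp
  · intro ℓ _ hℓ
    simp [zero_pow hℓ]
  · simp

lemma Qpoly_key (d k : ℕ) (hd : 2 ≤ d) (hk : 2 ≤ k) :
    2 < Qpoly d k 1 + Qpoly d k (-1) := by
  have h1 : Qpoly d k 1 + Qpoly d k (-1)
      = ∑ ℓ ∈ Finset.range (k + 1),
        (((-1 : ℝ) ^ ℓ + 1) * (((k + ℓ + d - 2).choose ℓ) * (k.choose ℓ))) := by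
    rw [Qpoly, Qpoly, ← Finset.sum_add_distrib]
    refine Finset.sum_congr rfl fun ℓ _ => ?_
    have h : ((-1 : ℝ)) ^ ℓ * (-1) ^ ℓ = 1 := by
      rw [← pow_add]
      exact Even.neg_one_pow ⟨ℓ, rfl⟩
    rw [one_pow]
    linear_combination (((k + ℓ + d - 2).choose ℓ : ℝ) * (k.choose ℓ)) * h
  have hnonneg : ∀ ℓ ∈ Finset.range (k + 1),
      0 ≤ (((-1 : ℝ) ^ ℓ + 1) * (((k + ℓ + d - 2).choose ℓ) * (k.choose ℓ))) := by
    intro ℓ _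
    have h1 : (0 : ℝ) ≤ (-1 : ℝ) ^ ℓ + 1 := by
      rcases Nat.even_or_odd ℓ with h | h
      · rw [h.neg_one_pow]; norm_num
      · rw [h.neg_one_pow]; norm_num
    positivity
  have hsubset : ({0, 2} : Finset ℕ) ⊆ Finset.range (k + 1) := by
    intro ℓ hℓ
    simp only [Finset.mem_insert, Finset.mem_singleton] at hℓ
    simp only [Finset.mem_range]
    omega
  have hle := Finset.sum_le_sum_of_subset_of_nonneg hsubset
    (fun ℓ hℓ _ => hnonneg ℓ hℓ)
  rw [Finset.sum_pair (by norm_num : (0 : ℕ) ≠ 2)] at hle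
  have h0 : (((-1 : ℝ) ^ 0 + 1) * (((k + 0 + d - 2).choose 0) * (k.choose 0))) = 2 := by
    norm_num
  have h2 : (2 : ℝ) ≤ (((-1 : ℝ) ^ 2 + 1) * (((k + 2 + d - 2).choose 2) * (k.choose 2))) := by
    have hc1 : 1 ≤ (k + 2 + d - 2).choose 2 := Nat.choose_pos (by omega)
    have hc2 : 1 ≤ k.choose 2 := Nat.choose_pos hk
    have hn : 1 ≤ (k + 2 + d - 2).choose 2 * k.choose 2 := by
      simpa using Nat.mul_le_mul hc1 hc2
    have : (1 : ℝ) ≤ ((k + 2 + d - 2).choose 2 : ℝ) * (k.choose 2 : ℝ) := by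
      exact_mod_cast hn
    nlinarith
  rw [h1]
  calc (2 : ℝ) < 2 + 2 := by norm_num
    _ ≤ _ := by
        refine le_trans (add_le_add (le_of_eq h0.symm) h2) hle

/-- For `d ≥ 2` and `k ≥ 2` the polynomial `N_{k,d}` is not identically zero;
consequently the non-conforming Crouzeix–Raviart simplex function
`B_k^{CR,K̂} = N_{k,d}/d` does not vanish identically. -/
theorem Npoly_ne_zero (d k : ℕ) (hd : 2 ≤ d) (hk : 2 ≤ k) :
    ∃ x : Fin d → ℝ, Npoly d k x ≠ 0 := by
  set i0 : Fin d := ⟨0, by omega⟩ with hi0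
  set i1 : Fin d := ⟨1, by omega⟩ with hi1
  have hne : i0 ≠ i1 := by
    simp [hi0, hi1, Fin.ext_iff]
  set x : Fin d → ℝ := fun j => if j = i0 then 1 else if j = i1 then -1 else 0 with hx
  have hxi0 : x i0 = 1 := by simp [hx]
  have hxi1 : x i1 = -1 := by simp [hx, Ne.symm hne]
  have hsub : ({i0, i1} : Finset (Fin d)) ⊆ Finset.univ := Finset.subset_univ _
  have hxout : ∀ j ∈ Finset.univ \ ({i0, i1} : Finset (Fin d)), x j = 0 := by
    intro j hj
    simp only [Finset.mem_sdiff, Finset.mem_insert, Finset.mem_singleton, not_or] at hj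
    simp [hx, hj.2.1, hj.2.2]
  have hcard : (Finset.univ \ ({i0, i1} : Finset (Fin d))).card = d - 2 := by
    rw [Finset.card_sdiff_of_subset hsub, Finset.card_pair hne]
    simp
  -- coordinate sum is 0
  have hsum : ∑ j, x j = 0 := by
    rw [← Finset.sum_sdiff hsub, Finset.sum_pair hne, hxi0, hxi1]
    rw [Finset.sum_congr rfl hxout]
    simp
  -- sum of Qpoly values
  have hQsum : ∑ j, Qpoly d k (x j)
      = Qpoly d k 1 + Qpoly d k (-1) + ((d : ℝ) - 2) := by
    rw [← Finset.sum_sdiff hsub, Finset.sum_pair hne, hxi0, hxi1]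
    rw [Finset.sum_congr rfl (fun j hj => by rw [hxout j hj])]
    rw [Finset.sum_const, hcard, Qpoly_zero, nsmul_eq_mul]
    rw [Nat.cast_sub hd]
    push_cast
    ring
  -- value at x
  have hNx : Npoly d k x
      = -1 + (Qpoly d k 1 + Qpoly d k (-1) + ((d : ℝ) - 2)) + Rpoly d k 0 := by
    rw [Npoly, hQsum, hsum]
  -- value at 0
  have hNy : Npoly d k (fun _ => (0 : ℝ)) = -1 + (d : ℝ) + Rpoly d k 0 := by
    rw [Npoly]
    simp [Qpoly_zero]
  have hkey := Qpoly_key d k hd hk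
  by_cases h0 : Npoly d k (fun _ => (0 : ℝ)) = 0
  · refine ⟨x, ?_⟩
    rw [hNy] at h0
    rw [hNx]
    intro hcon
    nlinarith
  · exact ⟨_, h0⟩
end

section
/- Let ℓ ≥ 1 and m ≥ ℓ+1 be integers and let v be a real polynomial in the variables x_1,…,x_ℓ of total degree at most m that vanishes at every point of the boundary of the standard simplex Δ_ℓ := {x ∈ ℝ^ℓ : x_j ≥ 0 for all j and x_1+⋯+x_ℓ ≤ 1} (i.e. v vanishes on each facet {x ∈ Δ_ℓ : x_i = 0}, 1 ≤ i ≤ ℓ, and on {x ∈ Δ_ℓ : x_1+⋯+x_ℓ = 1}). Then there exists a real polynomial q in x_1,…,x_ℓ of total degree at most m−(ℓ+1) such that v = x_1 ⋯ x_ℓ · (1 − x_1 − ⋯ − x_ℓ) · q. -/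
open MvPolynomial

/-- A real multivariate polynomial vanishing on an open box is zero. -/
lemma mv_zero_of_box {n : ℕ} (ε : ℝ) (hε : 0 < ε) (p : MvPolynomial (Fin n) ℝ)
    (h : ∀ x : Fin n → ℝ, (∀ j, x j ∈ Set.Ioo 0 ε) → MvPolynomial.eval x p = 0) : p = 0 := by
  induction n with
  | zero =>
    have := h (fun j => j.elim0) (fun j => j.elim0)
    rw [eq_C_of_isEmpty p] at this ⊢
    rw [eval_C] at this
    rw [this, map_zero]
  | succ n ih =>
    apply (finSuccEquiv ℝ n).injective
    rw [map_zero]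
    ext k : 1
    rw [Polynomial.coeff_zero]
    apply ih
    intro s hs
    have hmap : Polynomial.map (eval s) (finSuccEquiv ℝ n p) = 0 := by
      apply Polynomial.eq_zero_of_infinite_isRoot
      apply Set.Infinite.mono (s := Set.Ioo (0:ℝ) ε) _ (Set.Ioo_infinite hε)
      intro y hy
      have : MvPolynomial.eval (Fin.cons y s : Fin (n+1) → ℝ) p = 0 := by
        apply h
        intro j
        refine Fin.cases ?_ ?_ j
        · simpa using hy
        · intro j'; simpa using hs j'
      simpa [Polynomial.IsRoot, ← eval_eq_eval_mv_eval'] using this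
    have := congrArg (fun q => Polynomial.coeff q k) hmap
    simpa [Polynomial.coeff_map] using this

/-- evaluation only depends on coordinates in the "support". -/
lemma eval_update_of_support {n : ℕ} (p : MvPolynomial (Fin n) ℝ) (i : Fin n)
    (h : ∀ d ∈ p.support, d i = 0) (x : Fin n → ℝ) (y : ℝ) :
    MvPolynomial.eval (Function.update x i y) p = MvPolynomial.eval x p := by
  rw [eval_eq, eval_eq]
  refine Finset.sum_congr rfl fun d hd => ?_
  congr 1
  refine Finset.prod_congr rfl fun j hj => ?_
  have hji : j ≠ i := by
    rintro rfl
    exact (Finsupp.mem_support_iff.mp hj) (h d hd)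
  rw [Function.update_of_ne hji]

/-- If a polynomial vanishes on the facet `x i = 0` of the simplex, then `X i ∣ p`. -/
lemma X_dvd_of_facet {n : ℕ} (hn : 1 ≤ n) (p : MvPolynomial (Fin n) ℝ) (i : Fin n)
    (h : ∀ x : Fin n → ℝ, x i = 0 → (∀ j, 0 ≤ x j) → ∑ j, x j ≤ 1 →
      MvPolynomial.eval x p = 0) : X i ∣ p := by
  classical
  rw [X_dvd_iff_modMonomial_eq_zero]
  set r := p.modMonomial (Finsupp.single i 1) with hr
  have hsupp : ∀ d ∈ r.support, d i = 0 := by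
    intro d hd
    by_contra hdi
    have hle : Finsupp.single i 1 ≤ d := by
      intro j
      rcases eq_or_ne j i with rfl | hji
      · simpa [Finsupp.single_apply] using Nat.one_le_iff_ne_zero.mpr hdi
      · simp [Finsupp.single_apply, hji.symm]
    refine (Finsupp.mem_support_iff.mp hd) ?_
    show MvPolynomial.coeff d r = 0
    rw [hr, coeff_modMonomial_of_le _ hle]
  set ε : ℝ := 1 / (n + 1) with hε
  have hεpos : 0 < ε := by positivity
  apply mv_zero_of_box ε hεpos
  intro x hx
  have hx' : ∀ j, 0 ≤ Function.update x i 0 j := by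
    intro j
    rcases eq_or_ne j i with rfl | hji
    · simp
    · rw [Function.update_of_ne hji]; exact (hx j).1.le
  have hsum : ∑ j, Function.update x i 0 j ≤ 1 := by
    have h1 : ∀ j : Fin n, Function.update x i 0 j ≤ ε := by
      intro j
      rcases eq_or_ne j i with rfl | hji
      · simpa using hεpos.le
      · rw [Function.update_of_ne hji]; exact (hx j).2.le
    calc ∑ j, Function.update x i 0 j ≤ ∑ _j : Fin n, ε := Finset.sum_le_sum fun j _ => h1 j
      _ = n * ε := by simp [mul_comm]
      _ ≤ 1 := by
          rw [hε]
          rw [mul_one_div, div_le_one (by positivity)]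
          linarith
  have hev : MvPolynomial.eval (Function.update x i 0) p = 0 :=
    h _ (by simp) hx' hsum
  have hdecomp := divMonomial_add_modMonomial_single p i
  have : MvPolynomial.eval (Function.update x i 0) r = 0 := by
    have := congrArg (MvPolynomial.eval (Function.update x i 0)) hdecomp
    rw [map_add, map_mul, hev, eval_X, Function.update_self, zero_mul, zero_add] at this
    exact this
  rw [eval_update_of_support r i hsupp x 0] at this
  exact this


/-- total degree bound under substitution by degree-≤1 polynomials -/
lemma totalDegree_aeval_le {n : ℕ} (g : Fin n → MvPolynomial (Fin n) ℝ)
    (hg : ∀ j, (g j).totalDegree ≤ 1) (p : MvPolynomial (Fin n) ℝ) :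
    (MvPolynomial.aeval g p).totalDegree ≤ p.totalDegree := by
  conv_lhs => rw [p.as_sum]
  rw [map_sum]
  refine (totalDegree_finset_sum _ _).trans ?_
  apply Finset.sup_le
  intro d hd
  rw [aeval_monomial]
  refine (totalDegree_mul _ _).trans ?_
  have h1 : (algebraMap ℝ (MvPolynomial (Fin n) ℝ) (MvPolynomial.coeff d p)).totalDegree = 0 := by
    rw [algebraMap_eq]; exact totalDegree_C _
  rw [h1, zero_add]
  rw [Finsupp.prod]
  refine (totalDegree_finset_prod _ _).trans ?_
  have h2 : ∀ j ∈ d.support, ((g j) ^ (d j)).totalDegree ≤ d j := by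
    intro j _
    refine (totalDegree_pow _ _).trans ?_
    calc d j * (g j).totalDegree ≤ d j * 1 := Nat.mul_le_mul_left _ (hg j)
      _ = d j := mul_one _
  refine (Finset.sum_le_sum h2).trans ?_
  exact le_totalDegree hd

lemma prod_monomial_one {n : ℕ} (s : Finset (Fin n)) (f : Fin n → (Fin n →₀ ℕ)) :
    (∏ i ∈ s, (MvPolynomial.monomial (f i) (1:ℝ))) = MvPolynomial.monomial (∑ i ∈ s, f i) 1 := by
  classical
  induction s using Finset.induction with
  | empty => simp [MvPolynomial.monomial_zero', MvPolynomial.C_1]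
  | insert _ _ hns ih =>
    rw [Finset.prod_insert hns, Finset.sum_insert hns, ih, MvPolynomial.monomial_mul, one_mul]


lemma eval_aeval' {n : ℕ} (g : Fin n → MvPolynomial (Fin n) ℝ) (x : Fin n → ℝ)
    (p : MvPolynomial (Fin n) ℝ) :
    MvPolynomial.eval x (MvPolynomial.aeval g p)
      = MvPolynomial.eval (fun j => MvPolynomial.eval x (g j)) p := by
  induction p using MvPolynomial.induction_on with
  | C a => simp [algebraMap_eq]
  | add p q hp hq => simp only [map_add, hp, hq]
  | mul_X p j hp => simp only [map_mul, aeval_X, eval_mul, eval_X, hp]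

theorem bubble_aux (n m : ℕ) (hm : (n+1) + 1 ≤ m)
    (v : MvPolynomial (Fin (n+1)) ℝ) (hv : v.totalDegree ≤ m)
    (hbd : ∀ x : Fin (n+1) → ℝ, (∀ j, 0 ≤ x j) → ∑ j, x j ≤ 1 →
      ((∃ i, x i = 0) ∨ ∑ j, x j = 1) → MvPolynomial.eval x v = 0) :
    ∃ q : MvPolynomial (Fin (n+1)) ℝ, q.totalDegree ≤ m - ((n+1) + 1) ∧
      v = (∏ i, MvPolynomial.X i) * (1 - ∑ i, MvPolynomial.X i) * q := by
  classical
  set t : MvPolynomial (Fin (n+1)) ℝ := 1 - ∑ i, X i with ht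
  set σf : Fin (n+1) → MvPolynomial (Fin (n+1)) ℝ :=
    Function.update (fun j : Fin (n+1) => (X j : MvPolynomial (Fin (n+1)) ℝ)) 0 t with hσf
  have hσ0 : σf 0 = t := Function.update_self _ _ _
  have hσne : ∀ j : Fin (n+1), j ≠ 0 → σf j = X j := fun j hj => Function.update_of_ne hj _ _
  have hσdeg : ∀ j, (σf j).totalDegree ≤ 1 := by
    intro j
    rcases eq_or_ne j 0 with rfl | hj
    · rw [hσ0, ht, sub_eq_add_neg]
      refine (totalDegree_add _ _).trans (max_le (by simp [totalDegree_one]) ?_)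
      rw [totalDegree_neg]
      refine (totalDegree_finset_sum _ _).trans (Finset.sup_le fun i _ => ?_)
      rw [totalDegree_X]
    · rw [hσne j hj, totalDegree_X]
  have hsumσ : ∑ j, σf j = 1 - X 0 := by
    rw [hσf, Finset.sum_update_of_mem (Finset.mem_univ 0),
      Finset.sum_sdiff_eq_sub (Finset.subset_univ {0}), Finset.sum_singleton, ht]
    ring
  set f : MvPolynomial (Fin (n+1)) ℝ →ₐ[ℝ] MvPolynomial (Fin (n+1)) ℝ :=
    MvPolynomial.aeval σf with hf
  have hfX : ∀ j, f (X j) = σf j := fun j => aeval_X _ _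
  have hft : f t = X 0 := by
    rw [ht, map_sub, map_one, map_sum]
    simp only [hfX]
    rw [hsumσ]; ring
  have hcomp : f.comp f = AlgHom.id ℝ (MvPolynomial (Fin (n+1)) ℝ) := by
    apply MvPolynomial.algHom_ext
    intro j
    rcases eq_or_ne j 0 with rfl | hj
    · simp only [AlgHom.comp_apply, AlgHom.id_apply, hfX, hσ0, hft]
    · simp only [AlgHom.comp_apply, AlgHom.id_apply, hfX, hσne j hj]
  have hff : ∀ p, f (f p) = p := fun p => AlgHom.congr_fun hcomp p
  -- each X i divides v
  have hXdvd : ∀ i, X i ∣ v := by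
    intro i
    refine X_dvd_of_facet (by omega) v i fun x hx0 hxnn hxsum => ?_
    exact hbd x hxnn hxsum (Or.inl ⟨i, hx0⟩)
  have hcoeff0 : ∀ d : Fin (n+1) →₀ ℕ, (∃ i, d i = 0) → MvPolynomial.coeff d v = 0 := by
    rintro d ⟨i, hdi⟩
    have h1 : v.modMonomial (Finsupp.single i 1) = 0 :=
      X_dvd_iff_modMonomial_eq_zero.mp (hXdvd i)
    have h2 : ¬ Finsupp.single i 1 ≤ d := by
      intro hle
      have := hle i
      simp [Finsupp.single_apply, hdi] at this
    have := coeff_modMonomial_of_not_le (s' := d) v h2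
    rw [h1] at this
    simpa using this.symm
  -- divide by the product of the X i
  set s1 : Fin (n+1) →₀ ℕ := ∑ i, Finsupp.single i 1 with hs1def
  have hs1 : ∀ j, s1 j = 1 := by
    intro j
    rw [hs1def, Finsupp.finset_sum_apply]
    simp [Finsupp.single_apply]
  have hsum_s1 : ∀ d : Fin (n+1) →₀ ℕ,
      ((s1 + d).sum fun _ e => e) = (n+1) + d.sum fun _ e => e := by
    intro d
    rw [Finsupp.sum_fintype _ _ (fun _ => rfl), Finsupp.sum_fintype _ _ (fun _ => rfl)]
    simp only [Finsupp.add_apply, hs1]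
    rw [Finset.sum_add_distrib]
    simp
  have hmod : v.modMonomial s1 = 0 := by
    ext d
    show MvPolynomial.coeff d (v.modMonomial s1) = _
    by_cases hle : s1 ≤ d
    · rw [coeff_modMonomial_of_le _ hle, coeff_zero]
    · rw [coeff_modMonomial_of_not_le _ hle, coeff_zero]
      apply hcoeff0
      by_contra hall
      push_neg at hall
      refine hle (Finsupp.le_def.mpr fun j => ?_)
      have := hall j
      rw [hs1]
      omega
  set a : MvPolynomial (Fin (n+1)) ℝ := v.divMonomial s1 with ha
  have hva : (MvPolynomial.monomial s1 (1:ℝ)) * a = v := by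
    have := divMonomial_add_modMonomial v s1
    rwa [hmod, add_zero] at this
  have hP : (∏ i, (X i : MvPolynomial (Fin (n+1)) ℝ)) = MvPolynomial.monomial s1 1 := by
    rw [hs1def, ← prod_monomial_one]
    rfl
  have hdega : a.totalDegree ≤ m - (n+1) := by
    rw [totalDegree]
    apply Finset.sup_le
    intro d hd
    have h1 : MvPolynomial.coeff (s1 + d) v ≠ 0 := by
      have h0 := Finsupp.mem_support_iff.mp hd
      exact h0
    have h2 := le_totalDegree (Finsupp.mem_support_iff.mpr h1)
    rw [hsum_s1 d] at h2
    have h3 := h2.trans hv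
    omega
  -- t divides v
  have hw : X 0 ∣ f v := by
    refine X_dvd_of_facet (by omega) (f v) 0 fun x hx0 hxnn hxsum => ?_
    rw [hf, eval_aeval']
    set y : Fin (n+1) → ℝ := fun j => MvPolynomial.eval x (σf j) with hy
    have hy0 : y 0 = 1 - ∑ j, x j := by
      rw [hy]; simp only [hσ0, ht, map_sub, map_one, map_sum, eval_X]
    have hyne : ∀ j : Fin (n+1), j ≠ 0 → y j = x j := by
      intro j hj; rw [hy]; simp only [hσne j hj, eval_X]
    have hysum : ∑ j, y j = 1 := by
      have h5 : ∑ j, y j = MvPolynomial.eval x (∑ j, σf j) := by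
        rw [map_sum]
      rw [h5, hsumσ, map_sub, map_one, eval_X, hx0, sub_zero]
    refine hbd y ?_ (le_of_eq hysum) (Or.inr hysum)
    intro j
    rcases eq_or_ne j 0 with rfl | hj
    · rw [hy0]; linarith
    · rw [hyne j hj]; exact hxnn j
  have htv : t ∣ v := by
    have h1 : f (X 0) ∣ f (f v) := map_dvd f hw
    rwa [hff, hfX, hσ0] at h1
  -- t is prime
  have hprimeX0 : Prime (X 0 : MvPolynomial (Fin (n+1)) ℝ) := by
    have h1 := MulEquiv.prime_iff (MvPolynomial.finSuccEquiv ℝ n).toRingEquiv.toMulEquiv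
      (p := (X 0 : MvPolynomial (Fin (n+1)) ℝ)) |>.symm
    rw [h1]
    have h2 : (MvPolynomial.finSuccEquiv ℝ n).toRingEquiv.toMulEquiv (X 0) = Polynomial.X := by
      simpa using finSuccEquiv_X_zero (R := ℝ) (n := n)
    rw [h2]
    exact Polynomial.prime_X
  have hΦ : Prime t := by
    set Φ : MvPolynomial (Fin (n+1)) ℝ ≃ₐ[ℝ] MvPolynomial (Fin (n+1)) ℝ :=
      AlgEquiv.ofAlgHom f f hcomp hcomp with hΦdef
    have h1 := MulEquiv.prime_iff Φ.toRingEquiv.toMulEquiv (p := (X 0 : MvPolynomial (Fin (n+1)) ℝ))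
    have h2 : Φ.toRingEquiv.toMulEquiv (X 0) = t := by
      show f (X 0) = t
      rw [hfX, hσ0]
    rw [h2] at h1
    exact h1.mpr hprimeX0
  -- t does not divide the monomial
  have htm : ¬ t ∣ MvPolynomial.monomial s1 (1:ℝ) := by
    rw [← hP]
    intro hdvd
    obtain ⟨i, -, c, hc⟩ := hΦ.exists_mem_finset_dvd hdvd
    set u : Fin (n+1) → ℝ := fun _ => ((n+1 : ℕ) : ℝ)⁻¹ with hu
    have hpos : (0:ℝ) < ((n+1 : ℕ) : ℝ) := by positivity
    have hevalt : MvPolynomial.eval u t = 0 := by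
      rw [ht, map_sub, map_one, map_sum]
      simp only [eval_X, hu]
      rw [Finset.sum_const, Finset.card_univ, Fintype.card_fin, nsmul_eq_mul]
      rw [mul_inv_cancel₀ (ne_of_gt hpos), sub_self]
    have h6 := congrArg (MvPolynomial.eval u) hc
    rw [eval_X, map_mul, hevalt, zero_mul] at h6
    rw [hu] at h6
    exact (inv_ne_zero (ne_of_gt hpos)) h6
  have hta : t ∣ a := by
    have h1 : t ∣ MvPolynomial.monomial s1 (1:ℝ) * a := hva ▸ htv
    exact (hΦ.dvd_or_dvd h1).resolve_left htm
  -- divide f a by X 0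
  set b : MvPolynomial (Fin (n+1)) ℝ := f a with hb
  have hX0b : X 0 ∣ b := by
    have h1 : f t ∣ f a := map_dvd f hta
    rwa [hft] at h1
  set q' : MvPolynomial (Fin (n+1)) ℝ := b.divMonomial (Finsupp.single 0 1) with hq'
  have hbq : X 0 * q' = b := by
    have h1 := divMonomial_add_modMonomial_single b 0
    rwa [X_dvd_iff_modMonomial_eq_zero.mp hX0b, add_zero] at h1
  have hdegb : b.totalDegree ≤ m - (n+1) := by
    rw [hb, hf]
    exact (totalDegree_aeval_le σf hσdeg a).trans hdega
  have hdegq' : q'.totalDegree ≤ m - ((n+1) + 1) := by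
    rw [totalDegree]
    apply Finset.sup_le
    intro d hd
    have h1 : MvPolynomial.coeff (Finsupp.single 0 1 + d) b ≠ 0 := by
      have h0 := Finsupp.mem_support_iff.mp hd
      exact h0
    have h2 := le_totalDegree (Finsupp.mem_support_iff.mpr h1)
    have h3 : ((Finsupp.single 0 1 + d : Fin (n+1) →₀ ℕ).sum fun _ e => e)
        = 1 + d.sum fun _ e => e := by
      rw [Finsupp.sum_fintype _ _ (fun _ => rfl), Finsupp.sum_fintype _ _ (fun _ => rfl)]
      simp only [Finsupp.add_apply]
      rw [Finset.sum_add_distrib]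
      simp [Finsupp.single_apply]
    rw [h3] at h2
    have h4 := h2.trans hdegb
    omega
  refine ⟨f q', ?_, ?_⟩
  · exact (totalDegree_aeval_le σf hσdeg q').trans hdegq'
  · have h1 : f b = a := by rw [hb, hff]
    have h2 : f b = t * f q' := by
      rw [← hbq, map_mul, hfX, hσ0]
    calc v = MvPolynomial.monomial s1 1 * a := hva.symm
      _ = MvPolynomial.monomial s1 1 * (t * f q') := by rw [← h1, h2]
      _ = (∏ i, MvPolynomial.X i) * t * f q' := by rw [hP, mul_assoc]

/-- **Bubble factorization on the standard simplex.**
Let `ℓ ≥ 1`, `m ≥ ℓ+1`, and let `v` be a real polynomial in `x_1, …, x_ℓ` of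
total degree at most `m` vanishing at every point of the boundary of the
standard simplex `Δ_ℓ` (each facet `{x_i = 0}` and `{∑ x_j = 1}`).  Then
`v = x_1 ⋯ x_ℓ (1 - ∑ x_j) q` for some polynomial `q` of total degree at most
`m - (ℓ+1)`. -/
theorem bubble_factorization (ℓ m : ℕ) (hℓ : 1 ≤ ℓ) (hm : ℓ + 1 ≤ m)
    (v : MvPolynomial (Fin ℓ) ℝ) (hv : v.totalDegree ≤ m)
    (hbd : ∀ x : Fin ℓ → ℝ, (∀ j, 0 ≤ x j) → ∑ j, x j ≤ 1 →
      ((∃ i, x i = 0) ∨ ∑ j, x j = 1) → MvPolynomial.eval x v = 0) :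
    ∃ q : MvPolynomial (Fin ℓ) ℝ, q.totalDegree ≤ m - (ℓ + 1) ∧
      v = (∏ i, MvPolynomial.X i) * (1 - ∑ i, MvPolynomial.X i) * q := by
  obtain ⟨n, rfl⟩ : ∃ n, ℓ = n + 1 := ⟨ℓ - 1, by omega⟩
  exact bubble_aux n m hm v hv hbd
end

section
/- Let k ≥ 1 be an odd integer and let ν ∈ {0,…,k−1}. Then γ_ν · ∫_{−1}^{1} ( P_ν^{(1,1)}(x) − c_{ν,k} · P_{k−1}^{(1,1)}(x) ) dx = 1 if ν = k−1 and = 0 otherwise. -/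
/-- The Legendre polynomial
`L_n(x) = 2^{-n} ∑_{s=0}^{n} C(n,s)² (x-1)^{n-s} (x+1)^s`. -/
noncomputable def Leg (n : ℕ) (x : ℝ) : ℝ :=
  (1 / 2 ^ n) * ∑ s ∈ Finset.range (n + 1),
    (n.choose s : ℝ) ^ 2 * (x - 1) ^ (n - s) * (x + 1) ^ s

/-- The Jacobi polynomial `P_ν^{(1,1)}(x) = (2/(ν+2)) L_{ν+1}'(x)`. -/
noncomputable def Jac11 (ν : ℕ) (x : ℝ) : ℝ :=
  (2 / (ν + 2 : ℝ)) * deriv (Leg (ν + 1)) x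

/-- The normalization constant `γ_ν = (2ν+3)(ν+2)/(8(ν+1))`. -/
noncomputable def gam (ν : ℕ) : ℝ :=
  ((2 * ν + 3) * (ν + 2) : ℝ) / (8 * (ν + 1))

/-- The constant `c_{ν,k}`: for `ν ≤ k-2` it is
`((1-(-1)^{ν+1})/2) (k+1)/(ν+2)`, and `c_{k-1,k} = 1/(2k+1)`. -/
noncomputable def cJ (ν k : ℕ) : ℝ :=
  if ν = k - 1 then 1 / (2 * k + 1)
  else ((1 - (-1 : ℝ) ^ (ν + 1)) / 2) * (k + 1) / (ν + 2)

/-- `Leg n` as a polynomial. -/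
noncomputable def LegP (n : ℕ) : Polynomial ℝ :=
  Polynomial.C ((1:ℝ) / 2 ^ n) * ∑ s ∈ Finset.range (n + 1),
    Polynomial.C ((n.choose s : ℝ) ^ 2) * (Polynomial.X - 1) ^ (n - s) * (Polynomial.X + 1) ^ s

lemma Leg_eq (n : ℕ) : Leg n = fun x => (LegP n).eval x := by
  funext x
  simp [Leg, LegP, Polynomial.eval_finset_sum]

lemma integral_deriv_Leg (n : ℕ) :
    ∫ x in (-1:ℝ)..1, deriv (Leg n) x = Leg n 1 - Leg n (-1) := by
  have h1 : deriv (Leg n) = fun x => (LegP n).derivative.eval x := by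
    funext x
    rw [Leg_eq]
    exact Polynomial.deriv (p := LegP n)
  rw [h1, Leg_eq]
  exact intervalIntegral.integral_eq_sub_of_hasDerivAt
    (fun x _ => (LegP n).hasDerivAt x)
    ((LegP n).derivative.continuous.intervalIntegrable _ _)

lemma Leg_one (n : ℕ) : Leg n 1 = 1 := by
  unfold Leg
  rw [Finset.sum_eq_single n]
  · norm_num
  · intro s hs hne
    have h : 0 < n - s :=
      Nat.sub_pos_of_lt (lt_of_le_of_ne (Nat.lt_succ_iff.mp (Finset.mem_range.mp hs)) hne)
    simp [zero_pow h.ne']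
  · intro h; exact absurd (Finset.self_mem_range_succ n) h

lemma Leg_neg_one (n : ℕ) : Leg n (-1) = (-1) ^ n := by
  unfold Leg
  rw [Finset.sum_eq_single 0]
  · have : ((-1:ℝ) - 1) = -2 := by norm_num
    rw [this]
    rw [neg_pow]
    field_simp
    simp [mul_comm]
  · intro s hs hne
    simp [zero_pow hne]
  · intro h; simp at h

lemma Jac11_eq (ν : ℕ) :
    Jac11 ν = fun x => (2 / (ν + 2 : ℝ)) * (LegP (ν + 1)).derivative.eval x := by
  funext x
  rw [Jac11, Leg_eq]
  rw [Polynomial.deriv (p := LegP (ν + 1))]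

lemma Jac11_intIntegrable (ν : ℕ) (a b : ℝ) :
    IntervalIntegrable (Jac11 ν) MeasureTheory.volume a b := by
  rw [Jac11_eq]
  exact (continuous_const.mul ((LegP (ν + 1)).derivative.continuous)).intervalIntegrable _ _

lemma integral_Jac11 (ν : ℕ) :
    ∫ x in (-1:ℝ)..1, Jac11 ν x = (2 / (ν + 2 : ℝ)) * (1 - (-1) ^ (ν + 1)) := by
  unfold Jac11
  rw [intervalIntegral.integral_const_mul, integral_deriv_Leg, Leg_one, Leg_neg_one]


/-- For odd `k ≥ 1` and `ν ∈ {0, …, k-1}`: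
`γ_ν ∫_{-1}^{1} (P_ν^{(1,1)}(x) - c_{ν,k} P_{k-1}^{(1,1)}(x)) dx` equals `1`
if `ν = k-1` and `0` otherwise. -/
theorem edge_dof_biduality_nonconforming (k : ℕ) (hk : Odd k) (ν : ℕ)
    (hν : ν < k) :
    gam ν * ∫ x in (-1:ℝ)..1, (Jac11 ν x - cJ ν k * Jac11 (k - 1) x)
      = if ν = k - 1 then 1 else 0 := by
  obtain ⟨n, rfl⟩ := hk
  have hk1 : 2 * n + 1 - 1 = 2 * n := by omega
  rw [intervalIntegral.integral_sub (Jac11_intIntegrable ν _ _)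
      ((Jac11_intIntegrable _ _ _).const_mul _),
    intervalIntegral.integral_const_mul, integral_Jac11, integral_Jac11, hk1]
  have h2n : ((-1:ℝ)) ^ (2 * n + 1) = -1 := by
    rw [pow_succ, pow_mul]; norm_num
  by_cases hcase : ν = 2 * n
  · subst hcase
    rw [cJ, gam, if_pos hk1.symm, if_pos rfl, h2n]
    have h1 : ((2*n:ℕ):ℝ) = 2*n := by push_cast; ring
    have h2 : ((2*n+1:ℕ):ℝ) = 2*n+1 := by push_cast; ring
    rw [h1, h2]
    have hn2 : ((2:ℝ)*n + 2) ≠ 0 := by positivity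
    have hn1 : ((2:ℝ)*n + 1) ≠ 0 := by positivity
    have hn3 : (2*((2:ℝ)*n+1) + 1) ≠ 0 := by positivity
    field_simp
    ring
  · rw [cJ, gam, if_neg (by omega), if_neg hcase, h2n]
    have h2 : ((2*n+1:ℕ):ℝ) = 2*n+1 := by push_cast; ring
    have h1 : ((2*n:ℕ):ℝ) = 2*n := by push_cast; ring
    rw [h1, h2]
    have hν2 : ((ν:ℝ) + 2) ≠ 0 := by positivity
    have hk2 : ((2:ℝ)*n + 2) ≠ 0 := by positivity
    have hk3 : ((2:ℝ)*n + 1 + 1) ≠ 0 := by positivity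
    field_simp
    ring
end
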